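/- Let G be a locally finite connected simple graph on a countable vertex set V with maximum degree Δ, 2 ≤ Δ < ∞. Let S, T be countable discrete spaces and U a measurable space; let φ : T^V → S^V and φ' : U^V → T^V be measurable (with respect to the product σ-algebras), and let Z be a U^V-valued random variable on a probability space (Ω, 𝓕, P). Suppose there exist C > 0 and ν, ν' ∈ (0,1) such that for all v ∈ V and all integers r ≥ 0, P(R_v(φ, φ'(Z)) > r) ≤ C e^{−r^ν} and P(R_v(φ', Z) > r) ≤ C e^{−r^{ν'}}. Then there exist C'' > 0 and ν'' ∈ (0,1) such that for all v ∈ V and all r ≥ 0, P(R_v(φ ∘ φ', Z) > r) ≤ C'' e^{−r^{ν''}}. -/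

import Mathlib

set_option maxHeartbeats 1000000

open MeasureTheory

/-- The coding radius of `φ : T^V → S^V` at `y ∈ T^V` and `v ∈ V` (with respect to the
graph metric of `G`): the least `r ∈ ℕ ∪ {∞}` such that `φ y' v = φ y v` for every `y'`
agreeing with `y` on the ball `B(v, r)`; it is `∞` if no such `r` exists. -/
noncomputable def codingRadius {V T S : Type*} (G : SimpleGraph V)
    (φ : (V → T) → V → S) (y : V → T) (v : V) : ℕ∞ :=
  sInf {r : ℕ∞ | ∃ n : ℕ, r = (n : ℕ∞) ∧
    ∀ y' : V → T, (∀ u : V, G.dist u v ≤ n → y' u = y u) → φ y' v = φ y v}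

private lemma codingRadius_le_iff {V T S : Type*} (G : SimpleGraph V)
    (φ : (V → T) → V → S) (y : V → T) (v : V) (n : ℕ) :
    codingRadius G φ y v ≤ (n : ℕ∞) ↔
      ∀ y' : V → T, (∀ u : V, G.dist u v ≤ n → y' u = y u) → φ y' v = φ y v := by
  constructor
  · intro h
    by_contra hP
    push_neg at hP
    obtain ⟨y', hy', hne⟩ := hP
    have hlb : (((n + 1 : ℕ)) : ℕ∞) ≤ codingRadius G φ y v := by
      apply le_sInf
      rintro r ⟨m, rfl, hm⟩
      by_contra hlt
      push_neg at hlt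
      have hmn : m ≤ n := by
        have : m < n + 1 := by exact_mod_cast hlt
        omega
      exact hne (hm y' (fun u hu => hy' u (hu.trans hmn)))
    have h2 := hlb.trans h
    have : n + 1 ≤ n := by exact_mod_cast h2
    omega
  · intro hP
    exact sInf_le ⟨n, rfl, hP⟩

private lemma comp_radius_le {V T S U : Type*} (G : SimpleGraph V) (hconn : G.Connected)
    (φ : (V → T) → V → S) (φ' : (V → U) → V → T) (z : V → U) (v : V) (a b : ℕ)
    (h1 : codingRadius G φ (φ' z) v ≤ (a : ℕ∞))
    (h2 : ∀ u : V, G.dist u v ≤ a → codingRadius G φ' z u ≤ (b : ℕ∞)) :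
    codingRadius G (φ ∘ φ') z v ≤ ((a + b : ℕ) : ℕ∞) := by
  rw [codingRadius_le_iff]
  intro z' hz'
  simp only [Function.comp_apply]
  rw [codingRadius_le_iff] at h1
  apply h1
  intro u hu
  apply (codingRadius_le_iff G φ' z u b).mp (h2 u hu)
  intro w hw
  apply hz'
  calc G.dist w v ≤ G.dist w u + G.dist u v := hconn.dist_triangle
    _ ≤ b + a := Nat.add_le_add hw hu
    _ = a + b := Nat.add_comm b a


private lemma ball_cover {V : Type*} [DecidableEq V] (G : SimpleGraph V) (hconn : G.Connected)
    [G.LocallyFinite] (Δ : ℕ) (hdeg : ∀ v : V, G.degree v ≤ Δ) (v : V) :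
    ∀ n : ℕ, ∃ s : Finset V, (∀ u : V, G.dist u v ≤ n → u ∈ s) ∧ s.card ≤ (Δ + 1) ^ n := by
  intro n
  induction n with
  | zero =>
    refine ⟨{v}, fun u hu => ?_, by simp⟩
    have : G.dist u v = 0 := Nat.le_zero.mp hu
    have : u = v := (hconn.dist_eq_zero_iff).mp this
    simp [this]
  | succ n ih =>
    obtain ⟨s, hs, hcard⟩ := ih
    refine ⟨s.biUnion (fun w => insert w (G.neighborFinset w)), fun u hu => ?_, ?_⟩
    · rcases Nat.lt_or_ge (G.dist u v) (n + 1) with h | h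
      · exact Finset.mem_biUnion.mpr ⟨u, hs u (Nat.lt_succ_iff.mp h), Finset.mem_insert_self _ _⟩
      · have hd : G.dist u v = n + 1 := le_antisymm hu h
        have hne : G.dist u v ≠ 0 := by omega
        obtain ⟨p, hp⟩ := SimpleGraph.exists_walk_of_dist_ne_zero hne
        cases p with
        | nil => simp at hd
        | @cons _ w _ hadj q =>
          have hq : q.length = n := by
            simp [SimpleGraph.Walk.length_cons, hd] at hp; omega
          have hw : G.dist w v ≤ n := hq ▸ SimpleGraph.dist_le q
          exact Finset.mem_biUnion.mpr ⟨w, hs w hw,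
            Finset.mem_insert_of_mem ((G.mem_neighborFinset w u).mpr hadj.symm)⟩
    · calc (s.biUnion (fun w => insert w (G.neighborFinset w))).card
          ≤ ∑ w ∈ s, (insert w (G.neighborFinset w)).card := Finset.card_biUnion_le
        _ ≤ ∑ w ∈ s, (Δ + 1) := by
            refine Finset.sum_le_sum fun w _ => ?_
            calc (insert w (G.neighborFinset w)).card ≤ (G.neighborFinset w).card + 1 :=
                  Finset.card_insert_le _ _
              _ ≤ Δ + 1 := by
                  have := hdeg w
                  rw [SimpleGraph.degree] at this
                  omega
        _ = s.card * (Δ + 1) := by rw [Finset.sum_const, smul_eq_mul]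
        _ ≤ (Δ + 1) ^ n * (Δ + 1) := Nat.mul_le_mul_right _ hcard
        _ = (Δ + 1) ^ (n + 1) := (pow_succ _ _).symm


private lemma analysis (Δ : ℕ) (hΔ2 : 2 ≤ Δ) (C ν ν' : ℝ) (hC : 0 < C)
    (hν : 0 < ν) (hν1 : ν < 1) (hν' : 0 < ν') (hν'1 : ν' < 1) :
    ∃ r₀ : ℕ, ∀ r : ℕ, r₀ ≤ r →
      ⌈(r : ℝ) ^ (ν' / 2)⌉₊ ≤ r ∧
      C * Real.exp (-((⌈(r : ℝ) ^ (ν' / 2)⌉₊ : ℝ)) ^ ν)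
        + ((Δ : ℝ) + 1) ^ (⌈(r : ℝ) ^ (ν' / 2)⌉₊ : ℕ)
          * (C * Real.exp (-(((r - ⌈(r : ℝ) ^ (ν' / 2)⌉₊ : ℕ) : ℝ)) ^ ν'))
        ≤ 2 * C * Real.exp (-(r : ℝ) ^ (ν * ν' / 4)) := by
  set γ : ℝ := ν' / 2 with hγdef
  have hγ : 0 < γ := by positivity
  set L : ℝ := Real.log ((Δ : ℝ) + 1) with hLdef
  have hΔR : (2 : ℝ) ≤ (Δ : ℝ) := by exact_mod_cast hΔ2
  have hL : 0 < L := Real.log_pos (by linarith)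
  set M : ℝ := max (2 * (2 * L + 1)) 1 with hMdef
  have hM1 : (1 : ℝ) ≤ M := le_max_right _ _
  have hM0 : (0 : ℝ) ≤ M := by linarith
  refine ⟨max 9 ⌈M ^ γ⁻¹⌉₊, fun r hr => ?_⟩
  have hx9 : (9 : ℝ) ≤ (r : ℝ) := by
    have : 9 ≤ r := le_trans (le_max_left _ _) hr
    exact_mod_cast this
  have hx1 : (1 : ℝ) ≤ (r : ℝ) := by linarith
  have hx0 : (0 : ℝ) < (r : ℝ) := by linarith
  set x : ℝ := (r : ℝ) with hxdef
  set a : ℕ := ⌈x ^ γ⌉₊ with hadef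
  -- basic bounds on a
  have hxγ0 : (0 : ℝ) ≤ x ^ γ := by positivity
  have hxγ1 : (1 : ℝ) ≤ x ^ γ := Real.one_le_rpow hx1 hγ.le
  have ha_lb : x ^ γ ≤ (a : ℝ) := Nat.le_ceil _
  have ha_ub : (a : ℝ) ≤ x ^ γ + 1 := (Nat.ceil_lt_add_one hxγ0).le
  have hsq3 : (3 : ℝ) ≤ Real.sqrt x := by
    have h9 : Real.sqrt 9 = 3 := by
      rw [show (9 : ℝ) = 3 ^ 2 by norm_num, Real.sqrt_sq (by norm_num)]
    calc (3 : ℝ) = Real.sqrt 9 := h9.symm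
      _ ≤ Real.sqrt x := Real.sqrt_le_sqrt hx9
  have hsqx : Real.sqrt x ≤ x / 3 := by
    nlinarith [Real.sq_sqrt (le_of_lt hx0), Real.sqrt_nonneg x]
  have hγsqrt : x ^ γ ≤ Real.sqrt x := by
    rw [Real.sqrt_eq_rpow]
    exact Real.rpow_le_rpow_of_exponent_le hx1 (by linarith)
  have ha_half : (a : ℝ) ≤ x / 2 := by linarith
  have har' : (a : ℝ) ≤ x := by linarith
  have har : a ≤ r := by rw [hxdef] at har'; exact_mod_cast har'
  have hbcast : (((r - a : ℕ)) : ℝ) = x - (a : ℝ) := by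
    push_cast [Nat.cast_sub har]; ring
  have hbx : x / 2 ≤ (((r - a : ℕ)) : ℝ) := by rw [hbcast]; linarith
  refine ⟨har, ?_⟩
  -- the target exponent
  have hνν : x ^ (ν * ν' / 4) ≤ x ^ (γ * ν) := by
    apply Real.rpow_le_rpow_of_exponent_le hx1
    rw [hγdef]; nlinarith
  -- Term 1
  have t1 : C * Real.exp (-((a : ℝ)) ^ ν) ≤ C * Real.exp (-x ^ (ν * ν' / 4)) := by
    apply mul_le_mul_of_nonneg_left _ hC.le
    apply Real.exp_le_exp.mpr
    have h1 : x ^ (γ * ν) = (x ^ γ) ^ ν := Real.rpow_mul hx0.le γ ν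
    have h2 : (x ^ γ) ^ ν ≤ (a : ℝ) ^ ν := Real.rpow_le_rpow hxγ0 ha_lb hν.le
    linarith
  -- Term 2
  have hxM : M ^ γ⁻¹ ≤ x := by
    have h1 : (⌈M ^ γ⁻¹⌉₊ : ℕ) ≤ r := le_trans (le_max_right _ _) hr
    calc M ^ γ⁻¹ ≤ (⌈M ^ γ⁻¹⌉₊ : ℝ) := Nat.le_ceil _
      _ ≤ x := by rw [hxdef]; exact_mod_cast h1
  have hMγ : 2 * (2 * L + 1) ≤ x ^ γ := by
    have h1 : (M ^ γ⁻¹) ^ γ ≤ x ^ γ := Real.rpow_le_rpow (by positivity) hxM hγ.le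
    rw [Real.rpow_inv_rpow hM0 hγ.ne'] at h1
    exact le_trans (le_max_left _ _) h1
  have hkey : (a : ℝ) * L + x ^ (ν * ν' / 4) ≤ (((r - a : ℕ)) : ℝ) ^ ν' := by
    have h1 : (a : ℝ) * L ≤ 2 * x ^ γ * L := by
      apply mul_le_mul_of_nonneg_right _ hL.le
      linarith
    have h2 : x ^ (ν * ν' / 4) ≤ x ^ γ := by
      apply Real.rpow_le_rpow_of_exponent_le hx1
      rw [hγdef]; nlinarith
    have h3 : (x / 2) ^ ν' ≤ (((r - a : ℕ)) : ℝ) ^ ν' :=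
      Real.rpow_le_rpow (by positivity) hbx hν'.le
    have h2le : (2 : ℝ) ^ ν' ≤ 2 := by
      calc (2 : ℝ) ^ ν' ≤ (2 : ℝ) ^ (1 : ℝ) :=
            Real.rpow_le_rpow_of_exponent_le (by norm_num) hν'1.le
        _ = 2 := Real.rpow_one 2
    have h2p : (0 : ℝ) < (2 : ℝ) ^ ν' := by positivity
    have h4 : x ^ ν' / 2 ≤ (x / 2) ^ ν' := by
      rw [Real.div_rpow hx0.le (by norm_num : (0:ℝ) ≤ 2), div_le_div_iff₀ (by norm_num) h2p]
      nlinarith [Real.rpow_nonneg hx0.le ν']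
    have h5 : x ^ ν' = x ^ γ * x ^ γ := by
      rw [← Real.rpow_add hx0]
      congr 1
      rw [hγdef]; ring
    nlinarith [hMγ, hxγ1]
  have hpow : ((Δ : ℝ) + 1) ^ (a : ℕ) = Real.exp ((a : ℝ) * L) := by
    have h1 : (Δ : ℝ) + 1 = Real.exp L := (Real.exp_log (by positivity)).symm
    rw [h1, ← Real.exp_nat_mul]
  have t2 : ((Δ : ℝ) + 1) ^ (a : ℕ) * (C * Real.exp (-(((r - a : ℕ)) : ℝ) ^ ν'))
      ≤ C * Real.exp (-x ^ (ν * ν' / 4)) := by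
    have e1 : Real.exp ((a:ℝ) * L) * (C * Real.exp (-(((r - a : ℕ)) : ℝ) ^ ν'))
        = C * Real.exp ((a:ℝ) * L + -(((r - a : ℕ)) : ℝ) ^ ν') := by
      rw [Real.exp_add]; ring
    rw [hpow, e1]
    apply mul_le_mul_of_nonneg_left _ hC.le
    apply Real.exp_le_exp.mpr
    linarith
  linarith



/-- Composition of finitary codings with stretched-exponential tails on
the coding radius again has stretched-exponential tails: if
`P(R_v(φ, φ'(Z)) > r) ≤ C e^{-r^ν}` and `P(R_v(φ', Z) > r) ≤ C e^{-r^{ν'}}` for all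
`v ∈ V` and `r ≥ 0` with `ν, ν' ∈ (0,1)`, on a graph of maximum degree `Δ` with
`2 ≤ Δ < ∞`, then there are `C'' > 0` and `ν'' ∈ (0,1)` such that
`P(R_v(φ ∘ φ', Z) > r) ≤ C'' e^{-r^{ν''}}` for all `v` and `r`. -/
theorem stmt12 {V T S U : Type*} [Countable V] [Countable T] [Countable S]
    [MeasurableSpace T] [MeasurableSingletonClass T]
    [MeasurableSpace S] [MeasurableSingletonClass S]
    [MeasurableSpace U]
    (G : SimpleGraph V) (hconn : G.Connected) [G.LocallyFinite]
    (Δ : ℕ) (hΔ2 : 2 ≤ Δ) (hdeg : ∀ v : V, G.degree v ≤ Δ)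
    {Ω : Type*} [MeasurableSpace Ω] (P : Measure Ω) [IsProbabilityMeasure P]
    (φ : (V → T) → V → S) (φ' : (V → U) → V → T)
    (hφ : Measurable φ) (hφ' : Measurable φ')
    (Z : Ω → V → U) (hZ : Measurable Z)
    (C ν ν' : ℝ) (hC : 0 < C) (hν : 0 < ν) (hν1 : ν < 1) (hν' : 0 < ν') (hν'1 : ν' < 1)
    (hbound1 : ∀ (v : V) (r : ℕ),
      (P {ω | (r : ℕ∞) < codingRadius G φ (φ' (Z ω)) v}).toReal
        ≤ C * Real.exp (-(r : ℝ) ^ ν))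
    (hbound2 : ∀ (v : V) (r : ℕ),
      (P {ω | (r : ℕ∞) < codingRadius G φ' (Z ω) v}).toReal
        ≤ C * Real.exp (-(r : ℝ) ^ ν')) :
    ∃ C'' ν'' : ℝ, 0 < C'' ∧ 0 < ν'' ∧ ν'' < 1 ∧ ∀ (v : V) (r : ℕ),
      (P {ω | (r : ℕ∞) < codingRadius G (φ ∘ φ') (Z ω) v}).toReal
        ≤ C'' * Real.exp (-(r : ℝ) ^ ν'') := by
  classical
  obtain ⟨r₀, hr₀⟩ := analysis Δ hΔ2 C ν ν' hC hν hν1 hν' hν'1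
  set ν'' : ℝ := ν * ν' / 4 with hν''def
  set C'' : ℝ := max (2 * C) (Real.exp ((r₀ : ℝ) ^ ν'')) with hC''def
  have hC''pos : 0 < C'' := lt_of_lt_of_le (Real.exp_pos _) (le_max_right _ _)
  refine ⟨C'', ν'', hC''pos, by positivity, by nlinarith, ?_⟩
  intro v r
  by_cases hrr : r₀ ≤ r
  · -- main case
    obtain ⟨har, hF⟩ := hr₀ r hrr
    set a : ℕ := ⌈(r : ℝ) ^ (ν' / 2)⌉₊ with hadef
    set b : ℕ := r - a with hbdef
    obtain ⟨s, hs, hcard⟩ := ball_cover G hconn Δ hdeg v a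
    have hsub : {ω | (r : ℕ∞) < codingRadius G (φ ∘ φ') (Z ω) v} ⊆
        {ω | (a : ℕ∞) < codingRadius G φ (φ' (Z ω)) v} ∪
          ⋃ u ∈ s, {ω | (b : ℕ∞) < codingRadius G φ' (Z ω) u} := by
      intro ω hω
      simp only [Set.mem_setOf_eq] at hω
      by_contra hcon
      simp only [Set.mem_union, Set.mem_iUnion, Set.mem_setOf_eq, not_or, not_exists,
        not_lt] at hcon
      try push_neg at hcon
      obtain ⟨h1, h2⟩ := hcon
      have h2' : ∀ u : V, G.dist u v ≤ a → codingRadius G φ' (Z ω) u ≤ (b : ℕ∞) :=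
        fun u hu => h2 u (hs u hu)
      have hle := comp_radius_le G hconn φ φ' (Z ω) v a b h1 h2'
      rw [show a + b = r by omega] at hle
      exact absurd hω (not_lt.mpr hle)
    have hmeas : P {ω | (r : ℕ∞) < codingRadius G (φ ∘ φ') (Z ω) v}
        ≤ P {ω | (a : ℕ∞) < codingRadius G φ (φ' (Z ω)) v}
          + ∑ u ∈ s, P {ω | (b : ℕ∞) < codingRadius G φ' (Z ω) u} := by
      calc P {ω | (r : ℕ∞) < codingRadius G (φ ∘ φ') (Z ω) v}
          ≤ P ({ω | (a : ℕ∞) < codingRadius G φ (φ' (Z ω)) v} ∪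
              ⋃ u ∈ s, {ω | (b : ℕ∞) < codingRadius G φ' (Z ω) u}) := measure_mono hsub
        _ ≤ P {ω | (a : ℕ∞) < codingRadius G φ (φ' (Z ω)) v}
            + P (⋃ u ∈ s, {ω | (b : ℕ∞) < codingRadius G φ' (Z ω) u}) := measure_union_le _ _
        _ ≤ _ := add_le_add le_rfl (measure_biUnion_finset_le s _)
    have hsum_ne : (∑ u ∈ s, P {ω | (b : ℕ∞) < codingRadius G φ' (Z ω) u}) ≠ ⊤ :=
      ENNReal.sum_ne_top.mpr (fun u _ => measure_ne_top P _)
    have htr : (P {ω | (r : ℕ∞) < codingRadius G (φ ∘ φ') (Z ω) v}).toReal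
        ≤ (P {ω | (a : ℕ∞) < codingRadius G φ (φ' (Z ω)) v}).toReal
          + ∑ u ∈ s, (P {ω | (b : ℕ∞) < codingRadius G φ' (Z ω) u}).toReal := by
      have h1 := ENNReal.toReal_mono (ENNReal.add_ne_top.mpr ⟨measure_ne_top P _, hsum_ne⟩) hmeas
      rwa [ENNReal.toReal_add (measure_ne_top P _) hsum_ne,
        ENNReal.toReal_sum (fun u _ => measure_ne_top P _)] at h1
    calc (P {ω | (r : ℕ∞) < codingRadius G (φ ∘ φ') (Z ω) v}).toReal
        ≤ (P {ω | (a : ℕ∞) < codingRadius G φ (φ' (Z ω)) v}).toReal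
          + ∑ u ∈ s, (P {ω | (b : ℕ∞) < codingRadius G φ' (Z ω) u}).toReal := htr
      _ ≤ C * Real.exp (-(a : ℝ) ^ ν) + ∑ u ∈ s, C * Real.exp (-(b : ℝ) ^ ν') :=
          add_le_add (hbound1 v a) (Finset.sum_le_sum fun u _ => hbound2 u b)
      _ = C * Real.exp (-(a : ℝ) ^ ν) + (s.card : ℝ) * (C * Real.exp (-(b : ℝ) ^ ν')) := by
          rw [Finset.sum_const, nsmul_eq_mul]
      _ ≤ C * Real.exp (-(a : ℝ) ^ ν) + ((Δ : ℝ) + 1) ^ a * (C * Real.exp (-(b : ℝ) ^ ν')) := by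
          have hc : (s.card : ℝ) ≤ ((Δ : ℝ) + 1) ^ a := by
            have := hcard
            calc (s.card : ℝ) ≤ (((Δ + 1) ^ a : ℕ) : ℝ) := by exact_mod_cast hcard
              _ = ((Δ : ℝ) + 1) ^ a := by push_cast; ring
          have hpos : 0 < C * Real.exp (-(b : ℝ) ^ ν') := by positivity
          nlinarith
      _ ≤ 2 * C * Real.exp (-(r : ℝ) ^ ν'') := hF
      _ ≤ C'' * Real.exp (-(r : ℝ) ^ ν'') :=
          mul_le_mul_of_nonneg_right (le_max_left _ _) (Real.exp_pos _).le
  · push_neg at hrr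
    have h1 : (P {ω | (r : ℕ∞) < codingRadius G (φ ∘ φ') (Z ω) v}).toReal ≤ 1 := by
      have := ENNReal.toReal_mono ENNReal.one_ne_top (prob_le_one
        (μ := P) (s := {ω | (r : ℕ∞) < codingRadius G (φ ∘ φ') (Z ω) v}))
      simpa using this
    have h2 : (r : ℝ) ^ ν'' ≤ (r₀ : ℝ) ^ ν'' := by
      apply Real.rpow_le_rpow (Nat.cast_nonneg r) _ (by positivity)
      exact_mod_cast hrr.le
    calc (P {ω | (r : ℕ∞) < codingRadius G (φ ∘ φ') (Z ω) v}).toReal ≤ 1 := h1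
      _ = Real.exp ((r : ℝ) ^ ν'') * Real.exp (-(r : ℝ) ^ ν'') := by
          rw [← Real.exp_add]; simp
      _ ≤ Real.exp ((r₀ : ℝ) ^ ν'') * Real.exp (-(r : ℝ) ^ ν'') :=
          mul_le_mul_of_nonneg_right (Real.exp_le_exp.mpr h2) (Real.exp_pos _).le
      _ ≤ C'' * Real.exp (-(r : ℝ) ^ ν'') :=
          mul_le_mul_of_nonneg_right (le_max_right _ _) (Real.exp_pos _).le
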